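/- Let D_α ≥ 1 be a natural number and let |ψ₁⟩,...,|ψ_{D_α}⟩ be orthonormal vectors. Define |G⟩ = (1/√D_α) ∑ᵢ |ψᵢ⟩ and δ = (1/D_α) ∑ᵢ |ψᵢ⟩⟨ψᵢ|. Then the nonzero eigenvalues of A = |G⟩⟨G| - δ are (D_α - 1)/D_α with multiplicity 1 and -1/D_α with multiplicity D_α - 1; consequently the trace distance satisfies ½ Tr|A| = 1 - 1/D_α. -/

import Mathlib

open Matrix
open scoped ComplexOrder Classical

lemma aux_vmv_mul {m : ℕ} (a b c d : Fin m → ℂ) :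
    vecMulVec a b * vecMulVec c d = (b ⬝ᵥ c) • vecMulVec a d := by
  ext i j
  simp [mul_apply, vecMulVec_apply, dotProduct, Finset.sum_mul, Finset.mul_sum]
  congr 1; ext k; ring

lemma aux_trace_vmv {m : ℕ} (a b : Fin m → ℂ) : (vecMulVec a b).trace = a ⬝ᵥ b := by
  simp [trace, Matrix.diag, vecMulVec_apply, dotProduct]

lemma aux_trace_eig {m : ℕ} (A : Matrix (Fin m) (Fin m) ℂ) (hA : A.IsHermitian) :
    A.trace = ∑ i, (hA.eigenvalues i : ℂ) := by
  conv_lhs => rw [hA.spectral_theorem, Unitary.conjStarAlgAut_apply]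
  rw [Matrix.trace_mul_cycle,
    show (star (hA.eigenvectorUnitary : Matrix (Fin m) (Fin m) ℂ)) *
      (hA.eigenvectorUnitary : Matrix (Fin m) (Fin m) ℂ) = 1 from Unitary.coe_star_mul_self _,
    one_mul, trace_diagonal]
  rfl

lemma aux_trace_sq_eig {m : ℕ} (A : Matrix (Fin m) (Fin m) ℂ) (hA : A.IsHermitian) :
    (A * A).trace = ∑ i, (hA.eigenvalues i : ℂ)^2 := by
  conv_lhs => rw [hA.spectral_theorem, Unitary.conjStarAlgAut_apply]
  rw [show ∀ U Dg : Matrix (Fin m) (Fin m) ℂ,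
      (U * Dg * star U) * (U * Dg * star U) = U * (Dg * (star U * U) * Dg) * star U from
      fun U Dg => by noncomm_ring,
    show (star (hA.eigenvectorUnitary : Matrix (Fin m) (Fin m) ℂ)) *
      (hA.eigenvectorUnitary : Matrix (Fin m) (Fin m) ℂ) = 1 from Unitary.coe_star_mul_self _,
    Matrix.trace_mul_cycle,
    show (star (hA.eigenvectorUnitary : Matrix (Fin m) (Fin m) ℂ)) *
      (hA.eigenvectorUnitary : Matrix (Fin m) (Fin m) ℂ) = 1 from Unitary.coe_star_mul_self _,
    one_mul, mul_one, diagonal_mul_diagonal, trace_diagonal]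
  simp [sq]

lemma aux_scalar_cancel {m : ℕ} (v : Fin m → ℂ) (hv : v ≠ 0) (c c' : ℂ) (h : c • v = c' • v) :
    c = c' := by
  by_contra hne
  have h2 := sub_eq_zero.mpr h
  rw [← sub_smul] at h2
  rcases smul_eq_zero.mp h2 with h1 | h1
  · exact hne (sub_eq_zero.mp h1)
  · exact hv h1

set_option maxHeartbeats 1600000 in
/-- For orthonormal `|ψ₁⟩,…,|ψ_D⟩`, `|G⟩ = (1/√D) ∑ᵢ |ψᵢ⟩` and
`δ = (1/D) ∑ᵢ |ψᵢ⟩⟨ψᵢ|`, the nonzero eigenvalues of `A = |G⟩⟨G| - δ` are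
`(D-1)/D` with multiplicity `1` and `-1/D` with multiplicity `D-1`; consequently
`½ Tr|A| = 1 - 1/D`. -/
theorem graph_state_trace_distance {m D : ℕ} (hD : 1 ≤ D)
    (ψ : Fin D → (Fin m → ℂ))
    (horth : ∀ i j, star (ψ i) ⬝ᵥ ψ j = if i = j then 1 else 0)
    (G : Fin m → ℂ) (hG : G = ((Real.sqrt D : ℝ) : ℂ)⁻¹ • ∑ i, ψ i)
    (δ : Matrix (Fin m) (Fin m) ℂ)
    (hδ : δ = ((D : ℂ))⁻¹ • ∑ i, Matrix.vecMulVec (ψ i) (star (ψ i)))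
    (hA : (Matrix.vecMulVec G (star G) - δ).IsHermitian) :
    (Multiset.filter (fun x : ℝ => x ≠ 0) (Finset.univ.val.map hA.eigenvalues) =
      Multiset.filter (fun x : ℝ => x ≠ 0)
        ((((D : ℝ) - 1) / D) ::ₘ Multiset.replicate (D - 1) (-(1 / (D : ℝ))))) ∧
    (1/2) * (∑ i, |hA.eigenvalues i|) = 1 - 1/(D : ℝ) := by
  have hdr : (0:ℝ) < (D:ℝ) := by exact_mod_cast hD
  set d : ℂ := (D : ℂ) with hdd
  have hd : d ≠ 0 := by simp [hdd]; omega
  set s : Fin m → ℂ := ∑ i, ψ i with hs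
  set T : Matrix (Fin m) (Fin m) ℂ := vecMulVec s (star s) with hT
  set S : Matrix (Fin m) (Fin m) ℂ := ∑ i, vecMulVec (ψ i) (star (ψ i)) with hS
  have hstars : star s = ∑ i, star (ψ i) := by rw [hs, star_sum]
  have h1 : ∀ j, star s ⬝ᵥ ψ j = 1 := by
    intro j
    have e : star s ⬝ᵥ ψ j = ∑ i, star (ψ i) ⬝ᵥ ψ j := by
      simp only [dotProduct, hstars, Finset.sum_apply, Finset.sum_mul]
      exact Finset.sum_comm
    rw [e]; simp [horth]
  have h2 : ∀ i, star (ψ i) ⬝ᵥ s = 1 := by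
    intro i
    have e : star (ψ i) ⬝ᵥ s = ∑ j, star (ψ i) ⬝ᵥ ψ j := by
      simp only [dotProduct, hs, Finset.sum_apply, Finset.mul_sum]
      exact Finset.sum_comm
    rw [e]; simp [horth]
  have h3 : star s ⬝ᵥ s = d := by
    have e : star s ⬝ᵥ s = ∑ i, star (ψ i) ⬝ᵥ s := by
      simp only [dotProduct, hstars, Finset.sum_apply, Finset.sum_mul]
      exact Finset.sum_comm
    rw [e]; simp [h2, hdd]
  have hTT : T * T = d • T := by rw [hT, aux_vmv_mul, h3]
  have hST : S * T = T := by
    rw [hS, hT, Finset.sum_mul]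
    simp only [aux_vmv_mul, h2, one_smul]
    ext i j
    simp [Matrix.sum_apply, vecMulVec_apply, hs, Finset.sum_apply, Finset.sum_mul]
  have hTS : T * S = T := by
    rw [hS, hT, Finset.mul_sum]
    simp only [aux_vmv_mul, h1, one_smul]
    ext i j
    simp [Matrix.sum_apply, vecMulVec_apply, hstars, Finset.sum_apply, Finset.mul_sum]
  have hSS : S * S = S := by
    rw [hS, Finset.sum_mul_sum]
    simp only [aux_vmv_mul, horth]
    rw [Finset.sum_comm]
    simp [Finset.sum_ite_eq, ite_smul]
  have hDnn : (0:ℝ) ≤ (D:ℝ) := Nat.cast_nonneg D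
  have hc2 : (((Real.sqrt D : ℝ) : ℂ))⁻¹ * (((Real.sqrt D : ℝ) : ℂ))⁻¹ = d⁻¹ := by
    rw [← mul_inv]
    norm_cast
    rw [Real.mul_self_sqrt hDnn]
    simp [hdd]
  have hGG : vecMulVec G (star G) = d⁻¹ • T := by
    rw [hG, hT]
    have hstarG : star (((Real.sqrt D : ℝ) : ℂ)⁻¹ • s) = ((Real.sqrt D : ℝ) : ℂ)⁻¹ • star s := by
      rw [star_smul]
      congr 1
      simp [star_inv₀]
    rw [hstarG]
    ext i j
    simp only [vecMulVec_apply, Pi.smul_apply, smul_eq_mul, Matrix.smul_apply]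
    rw [← hc2]; ring
  have hAT : vecMulVec G (star G) - δ = d⁻¹ • (T - S) := by
    rw [hGG, hδ, smul_sub, hdd]
  set A : Matrix (Fin m) (Fin m) ℂ := vecMulVec G (star G) - δ with hAdef
  have hcubic : A * A * A = ((d - 2)/d) • (A * A) + ((d-1)/d^2) • A := by
    rw [hAT]
    simp only [smul_mul_assoc, mul_smul_comm, sub_mul, mul_sub, hTT, hTS, hST, hSS,
      smul_sub, smul_smul, smul_add]
    match_scalars <;> field_simp <;> ring
  -- traces
  have htrT : T.trace = d := by rw [hT, aux_trace_vmv, dotProduct_comm, h3]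
  have htrS : S.trace = d := by
    rw [hS, trace_sum]
    have e : ∀ i : Fin D, (vecMulVec (ψ i) (star (ψ i))).trace = 1 := by
      intro i
      rw [aux_trace_vmv, dotProduct_comm]
      simpa using horth i i
    simp [e, hdd]
  have htrA : A.trace = 0 := by
    rw [hAT, trace_smul, trace_sub, htrT, htrS]
    simp
  have htrA2 : (A * A).trace = (d - 1) / d := by
    rw [hAT]
    simp only [smul_mul_assoc, mul_smul_comm, sub_mul, mul_sub, hTT, hTS, hST, hSS,
      smul_sub, smul_smul, smul_add]
    simp only [trace_sub, trace_smul, trace_add, htrT, htrS]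
    field_simp
    simp only [smul_eq_mul, sub_self, mul_zero, sub_zero]
    field_simp
  set E : Fin m → ℝ := hA.eigenvalues with hE
  -- sum of eigenvalues
  have hsum : ∑ i, E i = 0 := by
    have h := aux_trace_eig A hA
    rw [htrA] at h
    have : ((∑ i, E i : ℝ) : ℂ) = 0 := by push_cast; rw [h]
    exact_mod_cast this
  have hsumsq : ∑ i, (E i)^2 = ((D:ℝ) - 1)/(D:ℝ) := by
    have h := aux_trace_sq_eig A hA
    rw [htrA2] at h
    have : ((∑ i, (E i)^2 : ℝ) : ℂ) = ((((D:ℝ) - 1)/(D:ℝ) : ℝ) : ℂ) := by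
      have e2 : ((((D:ℝ) - 1)/(D:ℝ) : ℝ) : ℂ) = (d-1)/d := by
        rw [hdd]; push_cast; ring
      rw [e2, h]
      push_cast
      try ring
    exact_mod_cast this
  -- roots
  set p : ℝ := ((D:ℝ) - 1)/(D:ℝ) with hp
  set q : ℝ := -(1/(D:ℝ)) with hq
  have hroot : ∀ i, E i = 0 ∨ E i = p ∨ E i = q := by
    intro i
    set v : Fin m → ℂ := ⇑(hA.eigenvectorBasis i) with hv
    have hvne : v ≠ 0 := by
      have h := hA.eigenvectorBasis.orthonormal.ne_zero i
      intro hc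
      exact h (by ext j; exact congrFun hc j)
    set x : ℝ := E i with hx
    have hmv : A *ᵥ v = (x:ℂ) • v := by
      rw [hv, hA.mulVec_eigenvectorBasis]
      ext j
      simp [Complex.real_smul]
      left; rfl
    have hmv3 : (A * A * A) *ᵥ v = ((x:ℂ)^3) • v := by
      simp only [← Matrix.mulVec_mulVec, hmv, Matrix.mulVec_smul]
      match_scalars
      ring
    have hmv3' : (A * A * A) *ᵥ v = (((d-2)/d) * (x:ℂ)^2 + ((d-1)/d^2) * (x:ℂ)) • v := by
      rw [hcubic, Matrix.add_mulVec, Matrix.smul_mulVec, Matrix.smul_mulVec]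
      simp only [← Matrix.mulVec_mulVec, hmv, Matrix.mulVec_smul]
      match_scalars
      ring
    have hsc : (x:ℂ)^3 = ((d-2)/d) * (x:ℂ)^2 + ((d-1)/d^2) * (x:ℂ) :=
      aux_scalar_cancel v hvne _ _ (hmv3.symm.trans hmv3')
    have hfact : (x:ℂ) * ((x:ℂ) - (d-1)/d) * ((x:ℂ) + 1/d) = 0 := by
      field_simp at hsc ⊢
      linear_combination hsc
    rcases mul_eq_zero.mp hfact with hf | hf
    · rcases mul_eq_zero.mp hf with hf2 | hf2
      · left; exact_mod_cast hf2
      · right; left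
        have : (x:ℂ) = ((p:ℝ):ℂ) := by
          rw [sub_eq_zero.mp hf2, hp, hdd]
          push_cast
          ring
        exact_mod_cast this
    · right; right
      have : (x:ℂ) = ((q:ℝ):ℂ) := by
        have := eq_neg_of_add_eq_zero_left hf
        rw [this, hq, hdd]
        push_cast
        ring
      exact_mod_cast this
  have hpq : p ≠ q := by
    intro h
    have : p - q = 1 := by rw [hp, hq]; field_simp; ring
    rw [h] at this; simp at this
  have hq0 : q ≠ 0 := by
    rw [hq]
    intro h
    have : (1:ℝ)/D > 0 := by positivity
    linarith [neg_eq_zero.mp h]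
  -- counting
  have hp0 : (0:ℝ) ≤ p := by
    rw [hp]
    apply div_nonneg _ (le_of_lt hdr)
    have : (1:ℝ) ≤ (D:ℝ) := by exact_mod_cast hD
    linarith
  set Fq : Finset (Fin m) := Finset.univ.filter (fun i => E i = q) with hFq
  set b : ℕ := Fq.card with hbdef
  have hqsum : ∑ i ∈ Fq, E i = (b:ℝ) * q := by
    rw [Finset.sum_congr rfl (fun i hi => (Finset.mem_filter.mp hi).2), Finset.sum_const,
      nsmul_eq_mul]
  have hsplit : ∑ i ∈ Fq, E i
      + ∑ i ∈ Finset.univ.filter (fun i => ¬ E i = q), E i = 0 := by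
    rw [hFq, Finset.sum_filter_add_sum_filter_not, hsum]
  set R : ℝ := ∑ i ∈ Finset.univ.filter (fun i => ¬ E i = q), E i with hRdef
  have hRsum : (b:ℝ) * q + R = 0 := by rw [← hqsum]; exact hsplit
  have hsq_split : ∑ i ∈ Fq, (E i)^2
      + ∑ i ∈ Finset.univ.filter (fun i => ¬ E i = q), (E i)^2 = p := by
    rw [hFq, Finset.sum_filter_add_sum_filter_not, hsumsq, hp]
  have hqsq : ∑ i ∈ Fq, (E i)^2 = (b:ℝ) * q^2 := by
    rw [Finset.sum_congr rfl (fun i hi => by rw [(Finset.mem_filter.mp hi).2]),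
      Finset.sum_const, nsmul_eq_mul]
  have hoffsq : ∑ i ∈ Finset.univ.filter (fun i => ¬ E i = q), (E i)^2 = p * R := by
    rw [hRdef, Finset.mul_sum]
    apply Finset.sum_congr rfl
    intro i hi
    rcases hroot i with h|h|h
    · rw [h]; ring
    · rw [h]; ring
    · exact absurd h (Finset.mem_filter.mp hi).2
  have e2 : (b:ℝ) * q^2 + p * R = p := by rw [← hqsq, ← hoffsq]; exact hsq_split
  have hRv : R = (b:ℝ)/D := by
    rw [hq] at hRsum
    have e : R = (b:ℝ) * (1/D) := by linarith
    rw [e]; ring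
  have h1d : (1:ℝ)/D + p = 1 := by rw [hp]; field_simp; ring
  have e3 : p = (b:ℝ)/D := by
    have e4 : (b:ℝ) * q^2 + p * R = ((b:ℝ)/D) * (1/D + p) := by
      rw [hRv, hq]; ring
    rw [← e2, e4, h1d, mul_one]
  have hbR : (b:ℝ) = (D:ℝ) - 1 := by
    rw [hp] at e3
    field_simp at e3
    linarith
  have hbN : b = D - 1 := by
    have : (b:ℝ) = ((D - 1 : ℕ):ℝ) := by rw [hbR, Nat.cast_sub hD]; norm_num
    exact_mod_cast this
  constructor
  · refine Multiset.ext.mpr fun x => ?_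
    rw [Multiset.count_filter, Multiset.count_filter]
    by_cases hx0 : x ≠ 0
    · rw [if_pos hx0, if_pos hx0, Multiset.count_map, Multiset.count_cons,
        Multiset.count_replicate]
      by_cases hxq : x = q
      · rw [if_pos hxq.symm, if_neg (fun h : x = p => hpq (h.symm.trans hxq))]
        have hfe : Finset.univ.filter (fun a => x = E a) = Fq := by
          ext i
          simp only [Finset.mem_filter, Finset.mem_univ, true_and, hFq]
          rw [hxq]
          exact eq_comm
        rw [show Multiset.filter (fun a => x = E a) Finset.univ.val
            = (Finset.univ.filter (fun a => x = E a)).val from (Finset.filter_val _ _).symm,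
          hfe, ← Finset.card_def, ← hbdef, hbN, add_zero]
      · by_cases hxp : x = p
        · rw [if_pos hxp, if_neg (fun h : q = x => hxq h.symm)]
          have hpne : p ≠ 0 := hxp ▸ hx0
          set Fp : Finset (Fin m) := Finset.univ.filter (fun i => E i = p) with hFp
          have hFpsum : ∑ i ∈ Fp, E i = (Fp.card:ℝ) * p := by
            rw [Finset.sum_congr rfl (fun i hi => (Finset.mem_filter.mp hi).2),
              Finset.sum_const, nsmul_eq_mul]
          have hoff : ∑ i ∈ Finset.univ.filter (fun i => ¬ E i = p), E i = (b:ℝ) * q := by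
            have hsubset : Fq ⊆ Finset.univ.filter (fun i => ¬ E i = p) := by
              intro i hi
              simp only [hFq, Finset.mem_filter, Finset.mem_univ, true_and] at hi ⊢
              intro h
              exact hpq (h.symm.trans hi)
            have hsub : Finset.univ.filter (fun i => ¬ E i = p)
                = Fq ∪ ((Finset.univ.filter (fun i => ¬ E i = p)) \ Fq) := by
              rw [Finset.union_sdiff_of_subset hsubset]
            rw [hsub, Finset.sum_union Finset.disjoint_sdiff]
            have hz : ∑ i ∈ (Finset.univ.filter (fun i => ¬ E i = p)) \ Fq, E i = 0 := by
              apply Finset.sum_eq_zero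
              intro i hi
              rcases Finset.mem_sdiff.mp hi with ⟨hi1, hi2⟩
              rcases hroot i with h|h|h
              · exact h
              · exact absurd h (Finset.mem_filter.mp hi1).2
              · exact absurd (by simp [hFq, h]) hi2
            rw [hqsum, hz, add_zero]
          have hsplitp : (Fp.card:ℝ) * p + (b:ℝ) * q = 0 := by
            rw [← hFpsum, ← hoff, hFp, Finset.sum_filter_add_sum_filter_not, hsum]
          have hbq : (b:ℝ) * q = -p := by rw [hbR, hq, hp]; ring
          have hcard1 : (Fp.card:ℝ) * p = p := by
            rw [hbq] at hsplitp
            linarith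
          have hfz : ((Fp.card:ℝ) - 1) * p = 0 := by
            rw [sub_mul, one_mul, hcard1, sub_self]
          have hcards : Fp.card = 1 := by
            rcases mul_eq_zero.mp hfz with h | h
            · have : (Fp.card:ℝ) = 1 := by linarith
              exact_mod_cast this
            · exact absurd h hpne
          have hfe : Finset.univ.filter (fun a => x = E a) = Fp := by
            ext i
            simp only [Finset.mem_filter, Finset.mem_univ, true_and, hFp]
            rw [hxp]
            exact eq_comm
          rw [show Multiset.filter (fun a => x = E a) Finset.univ.val
              = (Finset.univ.filter (fun a => x = E a)).val from (Finset.filter_val _ _).symm,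
            hfe, ← Finset.card_def, hcards]
        · rw [if_neg (fun h : q = x => hxq h.symm), if_neg hxp, add_zero]
          have hfe : Multiset.filter (fun a => x = E a) Finset.univ.val = 0 := by
            rw [Multiset.filter_eq_nil]
            intro i _ h
            rcases hroot i with hh|hh|hh
            · exact hx0 (h.trans hh)
            · exact hxp (h.trans hh)
            · exact hxq (h.trans hh)
          rw [hfe]
          rfl
    · rw [if_neg hx0, if_neg hx0]
  · -- sum of absolute values
    have key : ∀ i, |E i| = E i + 2 * (if E i = q then 1/(D:ℝ) else 0) := by
      intro i
      rcases hroot i with h|h|h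
      · rw [h, if_neg (fun hh => hq0 hh.symm)]
        simp
      · rw [h, if_neg hpq, abs_of_nonneg hp0]
        ring
      · rw [h, if_pos rfl, hq, abs_neg, abs_of_nonneg (by positivity)]
        ring
    have hsumabs : ∑ i, |E i| = 2 * ((b:ℝ) * (1/(D:ℝ))) := by
      simp only [key]
      rw [Finset.sum_add_distrib, hsum, ← Finset.mul_sum, zero_add]
      congr 1
      rw [← Finset.sum_filter, ← hFq, Finset.sum_const, nsmul_eq_mul, ← hbdef]
    rw [hsumabs, hbR]
    field_simp
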